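/- Every m×n Latin rectangle on n symbols with m ≤ n/4 has an orthogonal mate. That is, if J is an m×n Latin rectangle with m ≤ n/4, there exists an m×n Latin rectangle L on the same n symbols such that the pairs (J(i,k), L(i,k)) over all cells (i,k) are pairwise distinct. -/
import Mathlib


/-- An `m × n` Latin rectangle on `n` symbols: each symbol occurs exactly once
in each row (rows are bijections) and at most once in each column. -/
def IsLatinRect (m n : ℕ) (L : Fin m → Fin n → Fin n) : Prop :=
  (∀ i : Fin m, Function.Bijective (L i)) ∧
  (∀ k : Fin n, Function.Injective (fun i : Fin m => L i k))

/-- Every `m × n` Latin rectangle with `m ≤ n/4` has an orthogonal mate. -/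
theorem latin_rectangle_orthogonal_mate_of_quarter (m n : ℕ) (hm : 4 * m ≤ n)
    (J : Fin m → Fin n → Fin n) (hJ : IsLatinRect m n J) :
    ∃ L : Fin m → Fin n → Fin n, IsLatinRect m n L ∧
      Function.Injective (fun p : Fin m × Fin n => (J p.1 p.2, L p.1 p.2)) := by
  classical
  obtain ⟨hJrow, hJcol⟩ := id hJ
  -- rows of J as equivs
  let e : Fin m → (Fin n ≃ Fin n) := fun i => Equiv.ofBijective (J i) (hJ.1 i)
  have key : ∀ r, (hr : r ≤ m) → ∃ L : Fin r → (Fin n ≃ Fin n),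
      (∀ k : Fin n, Function.Injective fun i : Fin r => (L i) k) ∧
      Function.Injective
        (fun p : Fin r × Fin n => (J (Fin.castLE hr p.1) p.2, (L p.1) p.2)) := by
    intro r
    induction r with
    | zero =>
      intro _
      exact ⟨fun i => i.elim0, fun k i => i.elim0, fun p => p.1.elim0⟩
    | succ r ih =>
      intro hr1
      have hrm : r < m := hr1
      obtain ⟨L, hLcol, hLpair⟩ := ih (le_of_lt hrm)
      set rr : Fin m := ⟨r, hrm⟩ with hrr
      set c : Fin r → Fin m := Fin.castLE (le_of_lt hrm) with hc
      set F : Fin n → Finset (Fin n) := fun k =>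
        (Finset.univ.image fun i : Fin r => (L i) k) ∪
        (Finset.univ.image fun i : Fin r => (L i) ((e (c i)).symm (J rr k))) with hF
      set t : Fin n → Finset (Fin n) := fun k => (F k)ᶜ with ht
      have hFcard : ∀ k, (F k).card ≤ 2 * r := by
        intro k
        calc (F k).card ≤ _ + _ := Finset.card_union_le _ _
          _ ≤ 2 * r := by
            have h1 := Finset.card_image_le (s := (Finset.univ : Finset (Fin r)))
              (f := fun i : Fin r => (L i) k)
            have h2 := Finset.card_image_le (s := (Finset.univ : Finset (Fin r)))
              (f := fun i : Fin r => (L i) ((e (c i)).symm (J rr k)))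
            simp only [Finset.card_univ, Fintype.card_fin] at h1 h2
            omega
      have htcard : ∀ k, n - 2 * r ≤ (t k).card := by
        intro k
        have h1 : (t k).card = n - (F k).card := by
          rw [ht]; simp [Finset.card_compl]
        have h2 := hFcard k
        omega
      have h4r : 4 * r + 4 ≤ n := by omega
      have hall : ∀ A : Finset (Fin n), A.card ≤ (A.biUnion t).card := by
        intro A
        rcases A.eq_empty_or_nonempty with hA | ⟨k0, hk0⟩
        · simp [hA]
        by_cases hsmall : A.card ≤ n - 2 * r
        · calc A.card ≤ (t k0).card := le_trans hsmall (htcard k0)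
            _ ≤ (A.biUnion t).card :=
              Finset.card_le_card (Finset.subset_biUnion_of_mem t hk0)
        · push_neg at hsmall
          have huniv : A.biUnion t = Finset.univ := by
            apply Finset.eq_univ_of_forall
            intro s
            by_contra hs
            simp only [Finset.mem_biUnion, not_exists, not_and] at hs
            have hsub : A ⊆
                (Finset.univ.image fun i : Fin r => (L i).symm s) ∪
                (Finset.univ.image fun i : Fin r =>
                  (e rr).symm (e (c i) ((L i).symm s))) := by
              intro k hk
              have hmem : s ∈ F k := by
                have := hs k hk
                simpa [ht, Finset.mem_compl] using this
              rw [hF] at hmem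
              simp only [Finset.mem_union, Finset.mem_image, Finset.mem_univ,
                true_and] at hmem
              rcases hmem with ⟨i, hi⟩ | ⟨i, hi⟩
              · apply Finset.mem_union_left
                simp only [Finset.mem_image, Finset.mem_univ, true_and]
                exact ⟨i, by rw [← hi]; exact ((L i).symm_apply_apply k).symm ▸ rfl⟩
              · apply Finset.mem_union_right
                simp only [Finset.mem_image, Finset.mem_univ, true_and]
                refine ⟨i, ?_⟩
                have h1 : (e (c i)).symm (J rr k) = (L i).symm s := by
                  rw [← hi]; exact ((L i).symm_apply_apply _).symm
                have h2 : J rr k = e (c i) ((L i).symm s) := by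
                  rw [← h1]; exact ((e (c i)).apply_symm_apply _).symm
                have h3 : e rr k = e (c i) ((L i).symm s) := h2
                rw [← h3]; exact (e rr).symm_apply_apply k
            have hcard : A.card ≤ 2 * r := by
              calc A.card ≤ _ := Finset.card_le_card hsub
                _ ≤ _ + _ := Finset.card_union_le _ _
                _ ≤ 2 * r := by
                  have h1 := Finset.card_image_le (s := (Finset.univ : Finset (Fin r)))
                    (f := fun i : Fin r => (L i).symm s)
                  have h2 := Finset.card_image_le (s := (Finset.univ : Finset (Fin r)))
                    (f := fun i : Fin r => (e rr).symm (e (c i) ((L i).symm s)))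
                  simp only [Finset.card_univ, Fintype.card_fin] at h1 h2
                  omega
            omega
          rw [huniv]
          simpa using Finset.card_le_univ A
      obtain ⟨f, hfinj, hft⟩ :=
        (Finset.all_card_le_biUnion_card_iff_existsInjective' t).1 hall
      have hfF : ∀ k, f k ∉ F k := by
        intro k
        have := hft k
        simpa [ht, Finset.mem_compl] using this
      have hfbij : Function.Bijective f := Finite.injective_iff_bijective.1 hfinj
      set π : Fin n ≃ Fin n := Equiv.ofBijective f hfbij with hπ
      set L' : Fin (r+1) → (Fin n ≃ Fin n) := Fin.snoc L π with hL'
      have hcastL : ∀ j : Fin r, L' j.castSucc = L j := fun j => by rw [hL']; exact Fin.snoc_castSucc (α := fun _ => Fin n ≃ Fin n) π L j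
      have hlastL : L' (Fin.last r) = π := by rw [hL']; exact Fin.snoc_last (α := fun _ => Fin n ≃ Fin n) π L
      -- π avoids column values
      have hπcol : ∀ (k : Fin n) (j : Fin r), π k ≠ L j k := by
        intro k j hEq
        apply hfF k
        rw [hF]
        apply Finset.mem_union_left
        simp only [Finset.mem_image, Finset.mem_univ, true_and]
        exact ⟨j, hEq.symm⟩
      -- π avoids pair conflicts
      have hπpair : ∀ (k k' : Fin n) (j : Fin r),
          J (c j) k = J rr k' → π k' ≠ L j k := by
        intro k k' j hJeq hEq
        apply hfF k'
        rw [hF]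
        apply Finset.mem_union_right
        simp only [Finset.mem_image, Finset.mem_univ, true_and]
        refine ⟨j, ?_⟩
        have hk : (e (c j)).symm (J rr k') = k := by
          rw [← hJeq]
          exact (e (c j)).symm_apply_apply k
        rw [hk, ← hEq]
        rfl
      refine ⟨L', ?_, ?_⟩
      · intro k i i' h
        induction i using Fin.lastCases with
        | last =>
          induction i' using Fin.lastCases with
          | last => rfl
          | cast j =>
            exfalso
            simp only [hlastL, hcastL] at h
            exact hπcol k j h
        | cast j =>
          induction i' using Fin.lastCases with
          | last =>
            exfalso
            simp only [hlastL, hcastL] at h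
            exact hπcol k j h.symm
          | cast j' =>
            simp only [hcastL] at h
            exact congrArg Fin.castSucc (hLcol k h)
      · intro p q hpq
        obtain ⟨i, k⟩ := p
        obtain ⟨i', k'⟩ := q
        simp only [Prod.mk.injEq] at hpq
        obtain ⟨h1, h2⟩ := hpq
        induction i using Fin.lastCases with
        | last =>
          induction i' using Fin.lastCases with
          | last =>
            simp only [hlastL] at h2
            exact congrArg _ (π.injective h2)
          | cast j' =>
            exfalso
            simp only [hlastL, hcastL] at h2
            have hcast : Fin.castLE hr1 (Fin.castSucc j') = c j' := rfl
            have hcast2 : Fin.castLE hr1 (Fin.last r) = rr := rfl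
            rw [hcast2, hcast] at h1
            exact hπpair k' k j' h1.symm h2
        | cast j =>
          induction i' using Fin.lastCases with
          | last =>
            exfalso
            simp only [hlastL, hcastL] at h2
            have hcast : Fin.castLE hr1 (Fin.castSucc j) = c j := rfl
            have hcast2 : Fin.castLE hr1 (Fin.last r) = rr := rfl
            rw [hcast2, hcast] at h1
            exact hπpair k k' j h1 h2.symm
          | cast j' =>
            simp only [hcastL] at h2
            have hcast : ∀ j : Fin r, Fin.castLE hr1 (Fin.castSucc j) =
                Fin.castLE (le_of_lt hrm) j := fun _ => rfl
            rw [hcast, hcast] at h1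
            have := hLpair (a₁ := (j, k)) (a₂ := (j', k'))
              (by simp only [Prod.mk.injEq]; exact ⟨h1, h2⟩)
            simp only [Prod.mk.injEq] at this
            exact Prod.ext (congrArg Fin.castSucc this.1) this.2
  obtain ⟨L, hcol, hpair⟩ := key m le_rfl
  refine ⟨fun i k => (L i) k, ⟨fun i => (L i).bijective, hcol⟩, ?_⟩
  intro p q hpq
  apply hpair
  have hcast : ∀ i : Fin m, Fin.castLE (le_refl m) i = i := fun i => Fin.ext rfl
  simpa [hcast] using hpq
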